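/- Let B be a nondegenerate symmetric bilinear form on ℝ^{n+2} of signature (n+1, 1) (i.e., equivalent to the form x₁y₁ + ⋯ + x_{n+1}y_{n+1} − x_{n+2}y_{n+2}), and let v, w ∈ ℝ^{n+2} be linearly independent vectors with B(v, v) = B(w, w) = 0. Then the restriction of B to the B-orthogonal complement V_∞ = {x ∈ ℝ^{n+2} : B(x, v) = 0 and B(x, w) = 0} is a positive definite bilinear form, and V_∞ has dimension n. -/

import Mathlib

open scoped RealInnerProductSpace

private lemma cs_eq {F : Type*} [NormedAddCommGroup F] [InnerProductSpace ℝ F] {a b : F}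
    (ha : a ≠ 0) (h : ⟪a, b⟫ * ⟪a, b⟫ = ⟪a, a⟫ * ⟪b, b⟫) : ∃ r : ℝ, b = r • a := by
  have hna : ‖a‖ ≠ 0 := norm_ne_zero_iff.mpr ha
  have h' : ⟪a, b⟫ * ⟪a, b⟫ = (‖a‖ * ‖b‖) * (‖a‖ * ‖b‖) := by
    rw [h, real_inner_self_eq_norm_mul_norm, real_inner_self_eq_norm_mul_norm]; ring
  rcases mul_self_eq_mul_self_iff.mp h' with h1 | h1
  · have h2 : ‖b‖ • a = ‖a‖ • b := inner_eq_norm_mul_iff_real.mp h1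
    exact ⟨‖a‖⁻¹ * ‖b‖, by rw [mul_smul, h2, inv_smul_smul₀ hna]⟩
  · have h1' : ⟪a, -b⟫ = ‖a‖ * ‖-b‖ := by rw [inner_neg_right, norm_neg, h1]; ring
    have h2 : ‖-b‖ • a = ‖a‖ • (-b) := inner_eq_norm_mul_iff_real.mp h1'
    rw [norm_neg, smul_neg] at h2
    exact ⟨-(‖a‖⁻¹ * ‖b‖), by rw [neg_smul, mul_smul, h2, smul_neg, inv_smul_smul₀ hna, neg_neg]⟩

private def mink (n : ℕ) (x y : Fin (n + 2) → ℝ) : ℝ :=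
  (∑ i : Fin (n + 1), x (Fin.castSucc i) * y (Fin.castSucc i))
    - x (Fin.last (n + 1)) * y (Fin.last (n + 1))

private def spat (n : ℕ) (x : Fin (n + 2) → ℝ) : EuclideanSpace ℝ (Fin (n + 1)) :=
  WithLp.toLp 2 (fun i => x (Fin.castSucc i))

private lemma mink_eq (n : ℕ) (x y : Fin (n + 2) → ℝ) :
    mink n x y = ⟪spat n x, spat n y⟫ - x (Fin.last (n + 1)) * y (Fin.last (n + 1)) := by
  simp [mink, spat, PiLp.inner_apply, RCLike.inner_apply, mul_comm]

private lemma eq_zero_of_parts (n : ℕ) {x : Fin (n + 2) → ℝ}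
    (h1 : spat n x = 0) (h2 : x (Fin.last (n + 1)) = 0) : x = 0 := by
  funext i
  induction i using Fin.lastCases with
  | last => exact h2
  | cast j => simpa [spat] using congrArg (fun z : EuclideanSpace ℝ (Fin (n + 1)) => z j) h1

private lemma pos_aux (n : ℕ) (x v w : Fin (n + 2) → ℝ) (hx : x ≠ 0)
    (hvv : mink n v v = 0) (hww : mink n w w = 0)
    (hxv : mink n x v = 0) (hxw : mink n x w = 0)
    (hind : LinearIndependent ℝ ![v, w]) : 0 < mink n x x := by
  have hvne : v ≠ 0 := by
    have := hind.ne_zero 0; simpa using this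
  have hwne : w ≠ 0 := by
    have := hind.ne_zero 1; simpa using this
  set a := spat n x with ha
  set bv := spat n v with hbv
  set bw := spat n w with hbw
  set s := x (Fin.last (n + 1))
  set tv := v (Fin.last (n + 1))
  set tw := w (Fin.last (n + 1))
  rw [mink_eq] at hvv hww hxv hxw ⊢
  -- basic facts
  have hvv' : ⟪bv, bv⟫ = tv * tv := by linarith
  have hww' : ⟪bw, bw⟫ = tw * tw := by linarith
  have hxv' : ⟪a, bv⟫ = s * tv := by linarith
  have hxw' : ⟪a, bw⟫ = s * tw := by linarith
  have htv : tv ≠ 0 := by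
    intro h0
    apply hvne
    refine eq_zero_of_parts n ?_ h0
    rw [h0, mul_zero] at hvv'
    exact inner_self_eq_zero.mp hvv'
  have htw : tw ≠ 0 := by
    intro h0
    apply hwne
    refine eq_zero_of_parts n ?_ h0
    rw [h0, mul_zero] at hww'
    exact inner_self_eq_zero.mp hww'
  by_contra hle
  push_neg at hle
  have haa : ⟪a, a⟫ ≤ s * s := by linarith
  have hs : s ≠ 0 := by
    intro h0
    apply hx
    refine eq_zero_of_parts n ?_ h0
    rw [h0] at haa
    have : ⟪a, a⟫ ≤ 0 := by linarith
    exact inner_self_eq_zero.mp (le_antisymm this real_inner_self_nonneg)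
  have hcsv := real_inner_mul_inner_self_le a bv
  have hcsw := real_inner_mul_inner_self_le a bw
  rw [hxv', hvv'] at hcsv
  rw [hxw', hww'] at hcsw
  have htv2 : 0 < tv * tv := mul_self_pos.mpr htv
  have htw2 : 0 < tw * tw := mul_self_pos.mpr htw
  have haa' : ⟪a, a⟫ = s * s := by nlinarith
  have hane : a ≠ 0 := by
    intro h0
    rw [h0, inner_zero_left] at haa'
    exact hs (by nlinarith)
  obtain ⟨rv, hrv⟩ := cs_eq hane (by rw [hxv', haa', hvv']; ring)
  obtain ⟨rw', hrw'⟩ := cs_eq hane (by rw [hxw', haa', hww']; ring)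
  have htvrv : tv = rv * s := by
    have : ⟪a, bv⟫ = rv * ⟪a, a⟫ := by rw [hrv, real_inner_smul_right]
    rw [hxv', haa'] at this
    exact mul_left_cancel₀ hs (by rw [this]; ring)
  have htwrw : tw = rw' * s := by
    have : ⟪a, bw⟫ = rw' * ⟪a, a⟫ := by rw [hrw', real_inner_smul_right]
    rw [hxw', haa'] at this
    exact mul_left_cancel₀ hs (by rw [this]; ring)
  have hveq : v = rv • x := by
    funext i
    induction i using Fin.lastCases with
    | last => simpa using htvrv
    | cast j =>
      have := congrArg (fun z : EuclideanSpace ℝ (Fin (n + 1)) => z j) hrv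
      simpa [spat, hbv, ha] using this
  have hweq : w = rw' • x := by
    funext i
    induction i using Fin.lastCases with
    | last => simpa using htwrw
    | cast j =>
      have := congrArg (fun z : EuclideanSpace ℝ (Fin (n + 1)) => z j) hrw'
      simpa [spat, hbw, ha] using this
  have hrvne : rv ≠ 0 := by
    intro h0; apply hvne; rw [hveq, h0, zero_smul]
  have hrwne : rw' ≠ 0 := by
    intro h0; apply hwne; rw [hweq, h0, zero_smul]
  have hzero : (1 : ℝ) • v + (-(rv / rw')) • w = 0 := by
    rw [one_smul, hveq, hweq, smul_smul, neg_mul, div_mul_cancel₀ rv hrwne, neg_smul,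
      add_neg_cancel]
  exact one_ne_zero ((LinearIndependent.pair_iff.mp hind 1 (-(rv / rw')) hzero).1)

/-- For a symmetric bilinear form `B` of signature `(n+1, 1)` on `ℝ^{n+2}` and linearly
independent `B`-null vectors `v, w`, the restriction of `B` to the `B`-orthogonal
complement of `v` and `w` is positive definite, and that complement has dimension `n`. -/
theorem null_complement_positive_definite
    (n : ℕ)
    (B : (Fin (n + 2) → ℝ) →ₗ[ℝ] (Fin (n + 2) → ℝ) →ₗ[ℝ] ℝ)
    (hsymm : ∀ x y, B x y = B y x)
    (hnd : ∀ x : Fin (n + 2) → ℝ, (∀ y : Fin (n + 2) → ℝ, B x y = 0) → x = 0)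
    (hsig : ∃ S : (Fin (n + 2) → ℝ) →ₗ[ℝ] (Fin (n + 2) → ℝ), Function.Bijective S ∧
      ∀ x y : Fin (n + 2) → ℝ,
        B (S x) (S y) = (∑ i : Fin (n + 1), x (Fin.castSucc i) * y (Fin.castSucc i))
          - x (Fin.last (n + 1)) * y (Fin.last (n + 1)))
    (v w : Fin (n + 2) → ℝ) (hind : LinearIndependent ℝ ![v, w])
    (hv : B v v = 0) (hw : B w w = 0)
    (W : Submodule ℝ (Fin (n + 2) → ℝ))
    (hW : ∀ x : Fin (n + 2) → ℝ, x ∈ W ↔ (B x v = 0 ∧ B x w = 0)) :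
    (∀ x ∈ W, x ≠ 0 → 0 < B x x) ∧ Module.finrank ℝ W = n := by
  obtain ⟨S, hSbij, hSeq⟩ := hsig
  set e := LinearEquiv.ofBijective S hSbij with he
  have hBeq : ∀ p q : Fin (n + 2) → ℝ, B p q = mink n (e.symm p) (e.symm q) := by
    intro p q
    have hp : S (e.symm p) = p := e.apply_symm_apply p
    have hq : S (e.symm q) = q := e.apply_symm_apply q
    rw [← hp, ← hq, hSeq, hp, hq]
    rfl
  have hind' : LinearIndependent ℝ ![e.symm v, e.symm w] := by
    have h1 : ![e.symm v, e.symm w] = ⇑(e.symm.toLinearMap) ∘ ![v, w] := by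
      funext i; fin_cases i <;> rfl
    rw [h1]
    exact hind.map' e.symm.toLinearMap e.symm.ker
  constructor
  · intro x hx hx0
    obtain ⟨hxv, hxw⟩ := (hW x).mp hx
    rw [hBeq]
    refine pos_aux n (e.symm x) (e.symm v) (e.symm w) ?_ ?_ ?_ ?_ ?_ hind'
    · intro h0
      apply hx0
      have := congrArg e h0
      rwa [e.apply_symm_apply, map_zero] at this
    · rw [← hBeq]; exact hv
    · rw [← hBeq]; exact hw
    · rw [← hBeq]; exact hxv
    · rw [← hBeq]; exact hxw
  · -- dimension count
    set φ : (Fin (n + 2) → ℝ) →ₗ[ℝ] ℝ × ℝ := (B.flip v).prod (B.flip w) with hφ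
    have hker : LinearMap.ker φ = W := by
      ext x
      simp [hφ, LinearMap.mem_ker, LinearMap.prod_apply, Prod.mk_eq_zero, hW x,
        LinearMap.flip_apply]
    have hrange : LinearMap.range φ = ⊤ := by
      by_contra hne
      obtain ⟨f, hfne, hfbot⟩ :=
        Submodule.exists_dual_map_eq_bot_of_lt_top (lt_top_iff_ne_top.mpr hne) inferInstance
      have hf0 : ∀ x : Fin (n + 2) → ℝ, f (φ x) = 0 := by
        intro x
        have : f (φ x) ∈ Submodule.map f (LinearMap.range φ) :=
          Submodule.mem_map_of_mem (LinearMap.mem_range_self φ x)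
        rwa [hfbot, Submodule.mem_bot] at this
      set c := f (1, 0) with hc
      set d := f (0, 1) with hd
      have hps : ∀ p : ℝ × ℝ, p = p.1 • ((1 : ℝ), (0 : ℝ)) + p.2 • ((0 : ℝ), (1 : ℝ)) := by
        intro p; ext <;> simp
      have hfp : ∀ p : ℝ × ℝ, f p = p.1 * c + p.2 * d := by
        intro p
        conv_lhs => rw [hps p]
        rw [map_add, map_smul, map_smul, smul_eq_mul, smul_eq_mul]
      have hcombo : c • v + d • w = 0 := by
        apply hnd
        intro y
        have h1 : B y (c • v + d • w) = 0 := by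
          have h2 := hf0 y
          rw [hfp] at h2
          simp only [hφ, LinearMap.prod_apply, Function.prod, LinearMap.flip_apply] at h2
          simp only [map_add, map_smul, smul_eq_mul]
          linear_combination h2
        rw [hsymm]
        exact h1
      obtain ⟨hc0, hd0⟩ := LinearIndependent.pair_iff.mp hind c d hcombo
      apply hfne
      apply LinearMap.ext
      intro p
      rw [hfp, hc0, hd0]
      simp
    have hrank := LinearMap.finrank_range_add_finrank_ker φ
    rw [hrange, hker] at hrank
    simp only [finrank_top, Module.finrank_pi, Module.finrank_prod, Module.finrank_self,
      Fintype.card_fin] at hrank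
    omega
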